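/- Let q be an odd prime power and let F_q be the finite field with q elements. Let k be a positive integer dividing q-1 and let a_1,...,a_k be the k distinct k-th roots of unity in F_q. Then the product over all pairs 1 ≤ i < j ≤ k of (a_j - a_i)(1/a_j - 1/a_i) equals k^k in F_q (i.e., the image of the integer k^k in F_q). -/

import Mathlib

open Polynomial Finset

theorem stmt_0 (F : Type*) [Field F] [Fintype F] (q k : ℕ)
    (hq : Fintype.card F = q) (hodd : Odd q) (hk : 0 < k) (hdvd : k ∣ q - 1)
    (a : Fin k → F) (ha : Function.Injective a) (hroot : ∀ i, a i ^ k = 1) :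
    (∏ i : Fin k, ∏ j : Fin k,
        if i < j then (a j - a i) * ((a j)⁻¹ - (a i)⁻¹) else 1) = (k : F) ^ k := by
  classical
  have ha0 : ∀ i, a i ≠ 0 := fun i h => by
    have h1 := hroot i
    rw [h, zero_pow hk.ne'] at h1
    exact zero_ne_one h1
  set A : F := ∏ i, a i with hA
  -- polynomial identity: X^k - 1 = ∏ (X - a i)
  have hmonic : (X ^ k - C (1:F)).Monic := monic_X_pow_sub_C 1 hk.ne'
  have hdeg : (X ^ k - C (1:F)).natDegree = k := natDegree_X_pow_sub_C
  have hne : (X ^ k - C (1:F)) ≠ 0 := hmonic.ne_zero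
  have hmem : ∀ i, a i ∈ (X ^ k - C (1:F)).roots := by
    intro i
    rw [mem_roots hne]
    simp [hroot i]
  have hnodup : (Finset.univ.val.map a).Nodup := Finset.univ.nodup.map ha
  have hm : (Finset.univ.val.map a) ≤ (X ^ k - C (1:F)).roots := by
    rw [Multiset.le_iff_subset hnodup]
    intro x hx
    obtain ⟨i, _, rfl⟩ := Multiset.mem_map.mp hx
    exact hmem i
  have hcard : (Finset.univ.val.map a).card = k := by simp
  have hroots : (X ^ k - C (1:F)).roots = Finset.univ.val.map a := by
    refine (Multiset.eq_of_le_of_card_le hm ?_).symm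
    rw [hcard]
    calc (X ^ k - C (1:F)).roots.card ≤ (X ^ k - C (1:F)).natDegree := card_roots' _
    _ = k := hdeg
  have hsplit : (X ^ k - C (1:F)) = ∏ i : Fin k, (X - C (a i)) := by
    have h2 := Splits.eq_prod_roots_of_monic
      ((splits_iff_card_roots).mpr (by rw [hroots, hcard, hdeg])) hmonic
    rw [h2, hroots, Multiset.map_map, Finset.prod_eq_multiset_prod]
    rfl
  -- derivative evaluation
  have hform : (Multiset.map (fun c => X - C c) (Finset.univ.val.map a)).prod
      = X ^ k - C (1:F) := by
    rw [Multiset.map_map, hsplit, Finset.prod_eq_multiset_prod]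
    rfl
  have hder : ∀ j, (∏ i ∈ Finset.univ.erase j, (a j - a i)) = (k : F) * (a j)⁻¹ := by
    intro j
    have hSj : a j ∈ Finset.univ.val.map a :=
      Multiset.mem_map_of_mem a (Finset.mem_univ j)
    have h2 := eval_multiset_prod_X_sub_C_derivative hSj
    rw [hform] at h2
    have h3 : ((Finset.univ.val.map a).erase (a j)) = (Finset.univ.erase j).val.map a := by
      rw [Finset.erase_val, ← Multiset.map_erase_of_mem a Finset.univ.val
        (Finset.mem_univ j)]
    rw [h3, Multiset.map_map] at h2
    have hpowinv : a j ^ (k - 1) = (a j)⁻¹ := by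
      refine (inv_eq_of_mul_eq_one_right ?_).symm
      rw [← pow_succ', Nat.sub_add_cancel hk]
      exact hroot j
    have h4 : Polynomial.eval (a j) (Polynomial.derivative (X ^ k - C (1:F)))
        = (k : F) * (a j)⁻¹ := by
      simp [derivative_X_pow, hpowinv]
    rw [h4] at h2
    rw [h2, Finset.prod_eq_multiset_prod]
    rfl
  -- product of all roots
  have hAval : A = (-1 : F) ^ (k + 1) := by
    have h1 := congrArg (Polynomial.eval (0:F)) hsplit
    simp only [eval_sub, eval_pow, eval_X, eval_C, eval_prod, zero_sub, zero_pow hk.ne'] at h1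
    have h2 : (∏ i : Fin k, -a i) = (-1 : F) ^ k * A := by
      calc (∏ i : Fin k, -a i) = ∏ i : Fin k, (-1) * a i := by simp
      _ = (∏ _i : Fin k, (-1 : F)) * ∏ i : Fin k, a i := Finset.prod_mul_distrib
      _ = (-1) ^ k * A := by rw [Finset.prod_const]; simp [hA]
    rw [h2] at h1
    have heven : ((-1 : F) ^ k) * ((-1 : F) ^ k) = 1 := by
      rw [← pow_add]; exact Even.neg_one_pow ⟨k, rfl⟩
    calc A = ((-1:F)^k * (-1:F)^k) * A := by rw [heven, one_mul]
    _ = (-1:F)^k * ((-1:F)^k * A) := by ring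
    _ = (-1:F)^k * (-1) := by rw [← h1]
    _ = (-1:F) ^ (k+1) := (pow_succ _ _).symm
  have hAk : A ^ k = 1 := by
    rw [hAval, ← pow_mul]
    exact Even.neg_one_pow (by simpa [mul_comm] using Nat.even_mul_succ_self k)
  -- pointwise rewrite of each factor
  have h0 : (∏ i : Fin k, ∏ j : Fin k,
        if i < j then (a j - a i) * ((a j)⁻¹ - (a i)⁻¹) else 1)
      = ∏ i : Fin k, ∏ j : Fin k,
          ((if i < j then a j - a i else 1) * (if i < j then a i - a j else 1)
            * (if i < j then (a i * a j)⁻¹ else 1)) := by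
    refine Finset.prod_congr rfl fun i _ => Finset.prod_congr rfl fun j _ => ?_
    by_cases h : i < j
    · simp only [if_pos h]
      have hinv : (a j)⁻¹ - (a i)⁻¹ = (a i - a j) * ((a i)⁻¹ * (a j)⁻¹) := by
        rw [sub_mul, ← mul_assoc, mul_inv_cancel₀ (ha0 i), one_mul,
          mul_comm (a i)⁻¹ (a j)⁻¹, ← mul_assoc, mul_inv_cancel₀ (ha0 j), one_mul]
      rw [hinv, mul_inv]
      ring
    · simp [h]
  rw [h0]
  simp only [Finset.prod_mul_distrib]
  have hP12 : (∏ i : Fin k, ∏ j : Fin k, if i < j then a j - a i else 1)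
      * (∏ i : Fin k, ∏ j : Fin k, if i < j then a i - a j else 1)
      = (k : F) ^ k * A⁻¹ := by
    rw [Finset.prod_comm (f := fun i j => if i < j then a j - a i else 1)]
    rw [← Finset.prod_mul_distrib]
    have hinner : ∀ j : Fin k, (∏ i : Fin k, if i < j then a j - a i else 1)
        * (∏ i : Fin k, if j < i then a j - a i else 1) = (k : F) * (a j)⁻¹ := by
      intro j
      rw [← Finset.prod_mul_distrib]
      have he : (∏ i : Fin k, ((if i < j then a j - a i else 1)
            * (if j < i then a j - a i else 1)))
          = ∏ i : Fin k, (if i ≠ j then a j - a i else 1) := by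
        refine Finset.prod_congr rfl fun i _ => ?_
        rcases lt_trichotomy i j with h | rfl | h
        · simp [h, h.ne, h.asymm]
        · simp
        · simp [h, h.ne', h.asymm]
      rw [he, ← Finset.prod_filter, Finset.filter_ne', hder j]
    rw [Finset.prod_congr rfl fun j _ => hinner j, Finset.prod_mul_distrib,
      Finset.prod_const, Finset.prod_inv_distrib, ← hA, Finset.card_univ, Fintype.card_fin]
  have hP3 : (∏ i : Fin k, ∏ j : Fin k, if i < j then (a i * a j)⁻¹ else 1)
      = (A ^ (k - 1))⁻¹ := by
    have h1 : (∏ i : Fin k, ∏ j : Fin k, if i < j then (a i * a j)⁻¹ else 1)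
        = (∏ i : Fin k, ∏ j : Fin k, if i < j then a i * a j else 1)⁻¹ := by
      rw [← Finset.prod_inv_distrib]
      refine Finset.prod_congr rfl fun i _ => ?_
      rw [← Finset.prod_inv_distrib]
      refine Finset.prod_congr rfl fun j _ => ?_
      by_cases h : i < j <;> simp [h]
    rw [h1]
    congr 1
    have h2 : (∏ i : Fin k, ∏ j : Fin k, if i < j then a i * a j else 1)
        = (∏ i : Fin k, ∏ j : Fin k, if i < j then a i else 1)
          * (∏ i : Fin k, ∏ j : Fin k, if i < j then a j else 1) := by
      rw [← Finset.prod_mul_distrib]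
      refine Finset.prod_congr rfl fun i _ => ?_
      rw [← Finset.prod_mul_distrib]
      refine Finset.prod_congr rfl fun j _ => ?_
      by_cases h : i < j <;> simp [h]
    rw [h2, Finset.prod_comm (f := fun i j => if i < j then a j else 1),
      ← Finset.prod_mul_distrib]
    have h3 : ∀ x : Fin k, (∏ j : Fin k, if x < j then a x else 1)
        * (∏ i : Fin k, if i < x then a x else 1) = a x ^ (k - 1) := by
      intro x
      rw [← Finset.prod_filter, ← Finset.prod_filter, Finset.prod_const,
        Finset.prod_const, ← pow_add]
      congr 1
      have hdisj : Disjoint (Finset.univ.filter (fun j : Fin k => x < j))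
          (Finset.univ.filter (fun j : Fin k => j < x)) := by
        rw [Finset.disjoint_left]
        intro b hb1 hb2
        exact absurd ((Finset.mem_filter.mp hb2).2.trans (Finset.mem_filter.mp hb1).2)
          (lt_irrefl b)
      rw [← Finset.card_union_of_disjoint hdisj, ← Finset.filter_or]
      have hfe : (Finset.univ.filter (fun j : Fin k => x < j ∨ j < x))
          = Finset.univ.erase x := by
        rw [← Finset.filter_ne']
        refine Finset.filter_congr fun j _ => ?_
        rw [ne_iff_lt_or_gt]
        exact or_comm
      rw [hfe, Finset.card_erase_of_mem (Finset.mem_univ x), Finset.card_univ,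
        Fintype.card_fin]
    rw [Finset.prod_congr rfl fun x _ => h3 x, Finset.prod_pow, ← hA]
  rw [hP12, hP3, mul_assoc, ← mul_inv, ← pow_succ', Nat.sub_add_cancel hk, hAk,
    inv_one, mul_one]
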